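/- Let Q be a cancellative additive commutative monoid and q ∈ Q an element such that the map ℕ → Q, n ↦ n • q, is injective. Then ℤ[Q] = AddMonoidAlgebra ℤ Q is a flat module over ℤ[ℕ] = AddMonoidAlgebra ℤ ℕ, via the ring homomorphism induced by the additive monoid homomorphism ℕ →+ Q sending n to n • q. -/

import Mathlib

set_option maxHeartbeats 1000000

open Finsupp LinearMap TensorProduct

/-- For a finite subset `F` of a cancellative monoid `Q`, there is a set `κ` such that
the translates `m + n • q` for `m ∈ κ`, `n : ℕ` are pairwise distinct and every element of
`F` is such a translate. -/
private lemma exists_kappa {Q : Type*} [AddCancelCommMonoid Q] (q : Q)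
    (hq : Function.Injective fun n : ℕ => n • q) (F : Finset Q) :
    ∃ κ : Set Q,
      (Function.Injective fun p : κ × ℕ => (p.1 : Q) + p.2 • q) ∧
      (∀ y ∈ F, ∃ m ∈ κ, ∃ n : ℕ, y = m + n • q) := by
  classical
  set S : Set Q := {x | ∃ y ∈ F, ∃ n : ℕ, x = y + n • q} with hS
  have hqinj : ∀ {a b : ℕ} (c : Q), c + a • q = c + b • q → a = b := by
    intro a b c h
    exact hq (add_left_cancel h)
  have cancel_step : ∀ (m m' : Q) (n n' : ℕ), n ≤ n' → m + n • q = m' + n' • q →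
      m = m' + (n' - n) • q := by
    intro m m' n n' hle h
    have : m + n • q = m' + (n' - n) • q + n • q := by
      rw [add_assoc, ← add_nsmul, Nat.sub_add_cancel hle]
      exact h
    exact add_right_cancel this
  refine ⟨{x | x ∈ S ∧ ¬ ∃ z ∈ S, x = z + q}, ?_, ?_⟩
  · -- injectivity
    have key : ∀ (m m' : Q) (n n' : ℕ), m' ∈ S → (¬ ∃ z ∈ S, m = z + q) → n ≤ n' →
        m + n • q = m' + n' • q → n' ≤ n := by
      intro m m' n n' hm' hmin hle h
      by_contra hlt
      push_neg at hlt
      have hm := cancel_step m m' n n' hle h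
      obtain ⟨k, hk⟩ : ∃ k, n' - n = k + 1 := ⟨n' - n - 1, by omega⟩
      refine hmin ⟨m' + k • q, ?_, ?_⟩
      · obtain ⟨y, hy, j, rfl⟩ := hm'
        exact ⟨y, hy, j + k, by rw [add_nsmul, add_assoc]⟩
      · rw [hm, hk, add_nsmul, one_nsmul, ← add_assoc]
    rintro ⟨⟨m, hmS, hmin⟩, n⟩ ⟨⟨m', hmS', hmin'⟩, n'⟩ h
    simp only at h
    have hnn' : n = n' := by
      rcases le_total n n' with hle | hle
      · exact le_antisymm hle (key m m' n n' hmS' hmin hle h)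
      · exact le_antisymm (key m' m n' n hmS hmin' hle h.symm) hle
    subst hnn'
    have : m = m' := add_right_cancel h
    simp only [Prod.mk.injEq, Subtype.mk.injEq]
    exact ⟨this, trivial⟩
  · -- every element of F is a translate of a minimal element
    intro y hy
    set K : Set ℕ := {k | ∃ z ∈ S, y = z + k • q} with hK
    have hyS : y ∈ S := ⟨y, hy, 0, by simp⟩
    have hK0 : 0 ∈ K := ⟨y, hyS, by simp⟩
    have h' : Q → ℕ := fun _ => 0
    set hh : Q → ℕ := fun z => if H : ∃ l : ℕ, y = z + l • q then H.choose else 0 with hhdef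
    have hbdd : BddAbove K := by
      refine ⟨F.sup hh, ?_⟩
      rintro k ⟨z, ⟨w, hw, j, rfl⟩, hk⟩
      have hy2 : y = w + (j + k) • q := by rw [hk, add_nsmul, add_assoc]
      have hex : ∃ l : ℕ, y = w + l • q := ⟨j + k, hy2⟩
      have hval : hh w = j + k := by
        rw [hhdef]
        simp only [dif_pos hex]
        exact hqinj w (hex.choose_spec.symm.trans hy2)
      calc k ≤ j + k := by omega
        _ = hh w := hval.symm
        _ ≤ F.sup hh := Finset.le_sup hw
    have hmem : sSup K ∈ K := Nat.sSup_mem ⟨0, hK0⟩ hbdd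
    obtain ⟨m, hmS, hmrep⟩ := hmem
    refine ⟨m, ⟨hmS, ?_⟩, sSup K, hmrep⟩
    rintro ⟨z, hzS, rfl⟩
    have : sSup K + 1 ∈ K := ⟨z, hzS, by rw [hmrep, succ_nsmul]; abel⟩
    have := le_csSup hbdd this
    omega

/-- Lemma 2.8: for a cancellative commutative monoid `Q` and an element `q ∈ Q` generating a
free submonoid of rank one, the induced ring homomorphism `ℤ[ℕ] → ℤ[Q]` is flat. -/
theorem flat_monoidAlgebra_of_rank_one
    {Q : Type*} [AddCancelCommMonoid Q] (q : Q)
    (hq : Function.Injective fun n : ℕ => n • q) :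
    let f : AddMonoidAlgebra ℤ ℕ →+* AddMonoidAlgebra ℤ Q :=
      AddMonoidAlgebra.mapDomainRingHom ℤ (multiplesHom Q q)
    letI := f.toAlgebra
    Module.Flat (AddMonoidAlgebra ℤ ℕ) (AddMonoidAlgebra ℤ Q) := by
  intro f
  letI := f.toAlgebra
  classical
  have hsmul : ∀ (p : AddMonoidAlgebra ℤ ℕ) (a : AddMonoidAlgebra ℤ Q), p • a = f p * a := by
    intro p a
    rw [Algebra.smul_def, RingHom.algebraMap_toAlgebra]
  have hf_single : ∀ (n : ℕ) (z : ℤ), f (AddMonoidAlgebra.single n z) = AddMonoidAlgebra.single (n • q) z := by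
    intro n z
    show AddMonoidAlgebra.mapDomain _ _ = _
    rw [AddMonoidAlgebra.mapDomain_single, multiplesHom_apply]
  have shift : ∀ (m : Q) (p : AddMonoidAlgebra ℤ ℕ),
      f p * AddMonoidAlgebra.single m (1 : ℤ) = AddMonoidAlgebra.mapDomain (fun n : ℕ => m + n • q) p := by
    intro m p
    induction p using AddMonoidAlgebra.induction_linear with
    | zero => simp
    | add a b ha hb => rw [map_add, add_mul, ha, hb, AddMonoidAlgebra.mapDomain_add]
    | single n z =>
      rw [hf_single, AddMonoidAlgebra.mapDomain_single]
      exact (AddMonoidAlgebra.single_mul_single _ _ _ _).trans (by rw [mul_one, add_comm])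
  rw [Module.Flat.iff_rTensor_injective']
  intro I
  rw [injective_iff_map_eq_zero]
  intro x hx
  obtain ⟨s, rfl⟩ := TensorProduct.exists_finset x
  obtain ⟨κ, hκinj, hκgen⟩ := exists_kappa q hq (s.sup fun p => p.2.coeff.support)
  set v : κ → AddMonoidAlgebra ℤ Q := fun m => AddMonoidAlgebra.single (m : Q) (1 : ℤ) with hv
  set ι : (κ →₀ AddMonoidAlgebra ℤ ℕ) →ₗ[AddMonoidAlgebra ℤ ℕ] AddMonoidAlgebra ℤ Q :=
    Finsupp.linearCombination _ v with hι
  have hι_single : ∀ (m : κ) (n : ℕ) (z : ℤ),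
      ι (Finsupp.single m (AddMonoidAlgebra.single n z)) = AddMonoidAlgebra.single ((m : Q) + n • q) z := by
    intro m n z
    rw [hι, Finsupp.linearCombination_single, hsmul, hf_single, hv]
    exact (AddMonoidAlgebra.single_mul_single _ _ _ _).trans (by rw [mul_one, add_comm])
  -- coefficient formula
  have happly : ∀ (g : κ →₀ AddMonoidAlgebra ℤ ℕ) (m : κ) (n : ℕ),
      (ι g).coeff ((m : Q) + n • q) = (g m).coeff n := by
    intro g m n
    rw [hι, Finsupp.linearCombination_apply, AddMonoidAlgebra.coeff_finsuppSum, Finsupp.sum_apply]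
    rw [Finsupp.sum]
    rw [Finset.sum_eq_single m (fun m' _ hne => ?_) (fun hns => ?_)]
    · rw [hsmul, shift]
      have hinj : Function.Injective fun n' : ℕ => (m : Q) + n' • q := by
        intro a b hab
        have := hκinj (a₁ := (m, a)) (a₂ := (m, b)) hab
        exact (Prod.mk.injEq _ _ _ _ ▸ this).2
      show Finsupp.mapDomain _ (g m).coeff _ = _
      exact Finsupp.mapDomain_apply hinj (g m).coeff n
    · rw [hsmul, shift]
      show Finsupp.mapDomain _ (g m').coeff _ = _
      refine Finsupp.mapDomain_notin_range _ _ ?_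
      rintro ⟨n', hn'⟩
      exact hne (congrArg Prod.fst (hκinj (a₁ := (m', n')) (a₂ := (m, n)) hn'))
    · rw [Finsupp.notMem_support_iff.mp hns]
      simp
  have hinjι : Function.Injective ι := by
    rw [injective_iff_map_eq_zero]
    intro g hg
    ext m n
    rw [← happly g m n, hg]
    simp
  have hmemrange : ∀ p ∈ s, (p.2 : AddMonoidAlgebra ℤ Q) ∈ LinearMap.range ι := by
    intro p hp
    have hsupp : (p.2.coeff.support : Set Q) ⊆ ↑(s.sup fun p => p.2.coeff.support) := by
      intro y hy
      exact_mod_cast (Finset.le_sup (f := fun p => p.2.coeff.support) hp) hy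
    have : p.2 = ∑ y ∈ p.2.coeff.support, AddMonoidAlgebra.single y (p.2.coeff y) := by
      conv_lhs => rw [← AddMonoidAlgebra.sum_coeff_single p.2]
      rfl
    rw [this]
    refine Submodule.sum_mem _ fun y hy => ?_
    obtain ⟨m, hm, n, hn⟩ := hκgen y (hsupp hy)
    exact ⟨Finsupp.single ⟨m, hm⟩ (AddMonoidAlgebra.single n (p.2.coeff y)), by rw [hι_single, ← hn]⟩
  choose g hg using hmemrange
  set x' : (I : Submodule (AddMonoidAlgebra ℤ ℕ) (AddMonoidAlgebra ℤ ℕ))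
      ⊗[AddMonoidAlgebra ℤ ℕ] (κ →₀ AddMonoidAlgebra ℤ ℕ) :=
    ∑ p ∈ s.attach, p.1.1 ⊗ₜ g p.1 p.2 with hx'
  have hxx : ι.lTensor I x' = ∑ p ∈ s, p.1 ⊗ₜ p.2 := by
    rw [hx', map_sum, ← Finset.sum_attach s (fun p => p.1 ⊗ₜ[AddMonoidAlgebra ℤ ℕ] p.2)]
    refine Finset.sum_congr rfl fun p _ => ?_
    rw [lTensor_tmul, hg]
  have hlTinj : Function.Injective (ι.lTensor (AddMonoidAlgebra ℤ ℕ)) := by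
    have hcomp : (TensorProduct.lid (AddMonoidAlgebra ℤ ℕ) (AddMonoidAlgebra ℤ Q)).toLinearMap
        ∘ₗ ι.lTensor (AddMonoidAlgebra ℤ ℕ)
        = ι ∘ₗ (TensorProduct.lid (AddMonoidAlgebra ℤ ℕ)
          (κ →₀ AddMonoidAlgebra ℤ ℕ)).toLinearMap := by
      apply TensorProduct.ext'
      intro r n
      simp [TensorProduct.lid_tmul]
    intro a b hab
    apply (TensorProduct.lid (AddMonoidAlgebra ℤ ℕ) (κ →₀ AddMonoidAlgebra ℤ ℕ)).injective
    apply hinjι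
    have ha := congrFun (congrArg DFunLike.coe hcomp) a
    have hb := congrFun (congrArg DFunLike.coe hcomp) b
    simp only [LinearMap.comp_apply, LinearEquiv.coe_coe] at ha hb
    rw [← ha, ← hb, hab]
  have hcomm : (I.subtype.rTensor (AddMonoidAlgebra ℤ Q)) (ι.lTensor I x')
      = (ι.lTensor (AddMonoidAlgebra ℤ ℕ))
        ((I.subtype.rTensor (κ →₀ AddMonoidAlgebra ℤ ℕ)) x') := by
    rw [← LinearMap.comp_apply, LinearMap.rTensor_comp_lTensor, ← LinearMap.lTensor_comp_rTensor,
      LinearMap.comp_apply]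
  letI : Zero ((AddMonoidAlgebra ℤ ℕ) ⊗[AddMonoidAlgebra ℤ ℕ] (κ →₀ AddMonoidAlgebra ℤ ℕ)) :=
    AddMonoid.toZero
  letI : Zero ((I : Submodule (AddMonoidAlgebra ℤ ℕ) (AddMonoidAlgebra ℤ ℕ))
      ⊗[AddMonoidAlgebra ℤ ℕ] (κ →₀ AddMonoidAlgebra ℤ ℕ)) := AddMonoid.toZero
  have h0 : (I.subtype.rTensor (κ →₀ AddMonoidAlgebra ℤ ℕ)) x' = 0 := by
    apply hlTinj
    rw [← hcomm, hxx, hx, map_zero]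
  have hx'0 : x' = 0 := by
    have hNflat : Module.Flat (AddMonoidAlgebra ℤ ℕ) (κ →₀ AddMonoidAlgebra ℤ ℕ) := inferInstance
    exact ((Module.Flat.iff_rTensor_injective' (R := AddMonoidAlgebra ℤ ℕ)
      (M := κ →₀ AddMonoidAlgebra ℤ ℕ)).mp hNflat I) (by rw [h0, map_zero])
  rw [← hxx, hx'0, map_zero]
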